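/- Let G ≤ S_n be a permutation group, τ ∈ G an n-cycle, and N ⊴ G a normal subgroup with G = N⟨τ⟩, G/N abelian, and N ∩ ⟨τ⟩ = {1}. Then the conjugacy class of τ in G equals the full coset Nτ. -/
import Mathlib

/-- A permutation commuting with a cycle of full support is a power of it. -/
lemma commute_full_support_cycle {n : ℕ} {τ g : Equiv.Perm (Fin n)}
    (hcyc : τ.IsCycle) (hsupp : τ.support = Finset.univ)
    (hcomm : Commute g τ) : g ∈ Subgroup.zpowers τ := by
  rw [hcyc.commute_iff] at hcomm
  obtain ⟨hc', hz⟩ := hcomm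
  have hg : Equiv.Perm.ofSubtype (g.subtypePerm hc') = g := by
    apply Equiv.Perm.ofSubtype_subtypePerm
    intro x _
    rw [hsupp]; exact Finset.mem_univ x
  rwa [hg] at hz

/-- If moreover `N ∩ ⟨τ⟩ = 1`, the conjugacy class of the `n`-cycle `τ` in `G`
equals the full coset `Nτ`. -/
theorem stmt2 (n : ℕ) (G N : Subgroup (Equiv.Perm (Fin n)))
    (hNG : N ≤ G)
    (hnormal : ∀ g ∈ G, ∀ x ∈ N, g * x * g⁻¹ ∈ N)
    (τ : Equiv.Perm (Fin n)) (hτG : τ ∈ G)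
    (hcyc : τ.IsCycle) (hsupp : τ.support = Finset.univ)
    (hgen : ∀ g ∈ G, ∃ x ∈ N, ∃ k : ℤ, g = x * τ ^ k)
    (hab : ∀ a ∈ G, ∀ b ∈ G, a * b * a⁻¹ * b⁻¹ ∈ N)
    (htriv : ∀ x ∈ N, x ∈ Subgroup.zpowers τ → x = 1) :
    (∀ g ∈ G, ∃ x ∈ N, g * τ * g⁻¹ = x * τ) ∧
    (∀ x ∈ N, ∃ g ∈ G, g * τ * g⁻¹ = x * τ) := by
  constructor
  · intro g hg
    refine ⟨g * τ * g⁻¹ * τ⁻¹, hab g hg τ hτG, ?_⟩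
    group
  · have key : Function.Surjective (fun y : N =>
        (⟨(y : Equiv.Perm (Fin n)) * τ * (y : Equiv.Perm (Fin n))⁻¹ * τ⁻¹,
          hab y (hNG y.2) τ hτG⟩ : N)) := by
      apply Finite.surjective_of_injective
      intro a b hab'
      set A : Equiv.Perm (Fin n) := (a : Equiv.Perm (Fin n)) with hA
      set B : Equiv.Perm (Fin n) := (b : Equiv.Perm (Fin n)) with hB
      have h0 : A * τ * A⁻¹ * τ⁻¹ = B * τ * B⁻¹ * τ⁻¹ := congrArg Subtype.val hab'
      have h : A * τ * A⁻¹ = B * τ * B⁻¹ := mul_right_cancel h0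
      have hcomm : Commute (B⁻¹ * A) τ := by
        have h2 : B⁻¹ * (A * τ * A⁻¹) * A = τ * (B⁻¹ * A) := by rw [h]; group
        show (B⁻¹ * A) * τ = τ * (B⁻¹ * A)
        rw [← h2]; group
      have hmem : B⁻¹ * A ∈ N := mul_mem (inv_mem b.2) a.2
      have h1 : B⁻¹ * A = 1 := htriv _ hmem (commute_full_support_cycle hcyc hsupp hcomm)
      exact Subtype.ext (inv_mul_eq_one.mp h1).symm
    intro x hx
    obtain ⟨y, hy⟩ := key ⟨x, hx⟩
    refine ⟨y, hNG y.2, ?_⟩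
    have h3 : (y : Equiv.Perm (Fin n)) * τ * (y : Equiv.Perm (Fin n))⁻¹ * τ⁻¹ = x :=
      congrArg Subtype.val hy
    calc (y : Equiv.Perm (Fin n)) * τ * (y : Equiv.Perm (Fin n))⁻¹
        = ((y : Equiv.Perm (Fin n)) * τ * (y : Equiv.Perm (Fin n))⁻¹ * τ⁻¹) * τ := by group
      _ = x * τ := by rw [h3]
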